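/- For valid strings g, h ∈ Valid_B and each i ∈ [1,B], out_M(s^{(i-1)}_M, g_i h_i) = (max^rg_M{g,h}_i, min^rg_M{g,h}_i), i.e., applying the closure of the output operator to the metastable prefix state and input bit pair yields the i-th bits of the metastable max and min. -/

import Mathlib

/-- A Kleene "bit": `some b` is a stable bit, `none` is metastable `M`. -/
abbrev KBit := Option Bool

/-- The `B`-bit binary reflected Gray code (bit `0` most significant). -/
def rg : (B : ℕ) → ℕ → (Fin B → Bool)
  | 0, _ => fun i => i.elim0
  | B + 1, x =>
      Fin.cons (decide (2 ^ B ≤ x)) (rg B (if x < 2 ^ B then x else 2 ^ (B + 1) - 1 - x))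

/-- Decoding of a `B`-bit binary reflected Gray code string. -/
def grayVal : (B : ℕ) → (Fin B → Bool) → ℕ
  | 0, _ => 0
  | B + 1, g =>
      if g 0 then 2 ^ (B + 1) - 1 - grayVal B (fun i => g i.succ)
      else grayVal B (fun i => g i.succ)

/-- The (stable) Gray codeword `rg_B(x)` viewed as a string over `{0,1,M}`. -/
def stableStr (B : ℕ) (x : ℕ) : Fin B → KBit := fun i => some (rg B x i)

/-- The superposition `rg_B(x) * rg_B(x+1)` of two consecutive Gray codewords. -/
def superStr (B : ℕ) (x : ℕ) : Fin B → KBit :=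
  fun i => if rg B x i = rg B (x + 1) i then some (rg B x i) else none

/-- Valid strings of length `B`: Gray codewords, or superpositions of two
consecutive Gray codewords. -/
def Valid (B : ℕ) : Set (Fin B → KBit) :=
  {g | (∃ x, x < 2 ^ B ∧ g = stableStr B x) ∨ (∃ x, x + 1 < 2 ^ B ∧ g = superStr B x)}

/-- The rank of a valid string in the total order `≺`: `rg_B(x)` has rank `2x` and
`rg_B(x) * rg_B(x+1)` has rank `2x + 1`. -/
noncomputable def rank (B : ℕ) (g : Fin B → KBit) : ℕ :=
  sInf {n | (∃ x, n = 2 * x ∧ g = stableStr B x) ∨ (∃ x, n = 2 * x + 1 ∧ g = superStr B x)}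

/-- The total order `⪯` on valid strings. -/
noncomputable def preceq (B : ℕ) (g h : Fin B → KBit) : Prop := rank B g ≤ rank B h

/-- The resolution of a string over `{0,1,M}`. -/
def res {B : ℕ} (x : Fin B → KBit) : Set (Fin B → Bool) :=
  {y | ∀ i : Fin B, ∀ b : Bool, x i = some b → y i = b}

open Classical in
/-- The superposition of a set of binary strings. -/
noncomputable def supStr {B : ℕ} (S : Set (Fin B → Bool)) : Fin B → KBit :=
  fun i =>
    if ∀ y ∈ S, y i = true then some true
    else if ∀ y ∈ S, y i = false then some false
    else none

/-- `max^rg` of two stable Gray code strings: the one of larger decoded value. -/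
def maxrg (B : ℕ) (g h : Fin B → Bool) : Fin B → Bool :=
  if grayVal B h ≤ grayVal B g then g else h

/-- `min^rg` of two stable Gray code strings: the one of smaller decoded value. -/
def minrg (B : ℕ) (g h : Fin B → Bool) : Fin B → Bool :=
  if grayVal B h ≤ grayVal B g then h else g

/-- The metastable closure `max^rg_M`, taken jointly over all resolutions of the pair. -/
noncomputable def maxrgM (B : ℕ) (g h : Fin B → KBit) : Fin B → KBit :=
  supStr {z | ∃ g' ∈ res g, ∃ h' ∈ res h, z = maxrg B g' h'}

/-- The metastable closure `min^rg_M`, taken jointly over all resolutions of the pair. -/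
noncomputable def minrgM (B : ℕ) (g h : Fin B → KBit) : Fin B → KBit :=
  supStr {z | ∃ g' ∈ res g, ∃ h' ∈ res h, z = minrg B g' h'}

/-- The transition operator `⋄` of the Gray-code comparison FSM:
`00 ⋄ x = x`; `01` and `10` are absorbing; `11 ⋄ 00 = 11`, `11 ⋄ 01 = 10`,
`11 ⋄ 11 = 00`, `11 ⋄ 10 = 01`. -/
def diamond : Bool × Bool → Bool × Bool → Bool × Bool
  | (false, false), x => x
  | (false, true), _ => (false, true)
  | (true, false), _ => (true, false)
  | (true, true), (a, b) => (!a, !b)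

/-- The state `s^{(i)}(g,h)` of the Gray-code comparison FSM after processing the
input pairs `g_1 h_1, …, g_i h_i`, starting from state `00`. -/
def fsmState (B : ℕ) (g h : Fin B → Bool) (i : ℕ) : Bool × Bool :=
  (List.range i).foldl
    (fun s j => if hj : j < B then diamond s (g ⟨j, hj⟩, h ⟨j, hj⟩) else s)
    (false, false)

/-- Resolutions of a possibly-metastable pair. -/
def resP (p : KBit × KBit) : Set (Bool × Bool) :=
  {q | (∀ b : Bool, p.1 = some b → q.1 = b) ∧ (∀ b : Bool, p.2 = some b → q.2 = b)}

open Classical in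
/-- Bitwise superposition of a set of binary pairs. -/
noncomputable def supP (S : Set (Bool × Bool)) : KBit × KBit :=
  ((if ∀ s ∈ S, s.1 = true then some true
    else if ∀ s ∈ S, s.1 = false then some false else none),
   (if ∀ s ∈ S, s.2 = true then some true
    else if ∀ s ∈ S, s.2 = false then some false else none))

/-- `s^{(i)}_M(g,h)`: the superposition, over all resolutions `g' ∈ res(g)` and
`h' ∈ res(h)`, of the FSM state after processing the first `i` bit pairs. -/
noncomputable def sM (B : ℕ) (g h : Fin B → KBit) (i : ℕ) : KBit × KBit :=
  supP {s | ∃ g' ∈ res g, ∃ h' ∈ res h, s = fsmState B g' h' i}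

/-- The metastable closure of a binary operator on binary pairs. -/
noncomputable def closure2 (f : Bool × Bool → Bool × Bool → Bool × Bool)
    (x y : KBit × KBit) : KBit × KBit :=
  supP {z | ∃ x' ∈ resP x, ∃ y' ∈ resP y, z = f x' y'}

/-- The output operator `out(s, g_i h_i)`: state `00` gives
`(max{g_i,h_i}, min{g_i,h_i})`, state `10` gives `(g_i, h_i)`, state `11` gives
`(min{g_i,h_i}, max{g_i,h_i})`, and state `01` gives `(h_i, g_i)`. -/
def outOp : Bool × Bool → Bool × Bool → Bool × Bool
  | (false, false), (a, b) => (a || b, a && b)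
  | (true, false), (a, b) => (a, b)
  | (true, true), (a, b) => (a && b, a || b)
  | (false, true), (a, b) => (b, a)

/-- The metastable closure `out_M` of the output operator. -/
noncomputable def outM : KBit × KBit → KBit × KBit → KBit × KBit :=
  closure2 outOp


lemma grayVal_tail (B : ℕ) (g : Fin (B+1) → Bool) :
    grayVal (B+1) g = if g 0 then 2^(B+1) - 1 - grayVal B (fun i => g i.succ)
      else grayVal B (fun i => g i.succ) := rfl

lemma grayVal_lt (B : ℕ) (g : Fin B → Bool) : grayVal B g < 2 ^ B := by
  induction B with
  | zero => simp [grayVal]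
  | succ B ih =>
    rw [grayVal]
    have h := ih (fun i => g i.succ)
    have h2 : (2:ℕ)^(B+1) = 2^B * 2 := pow_succ 2 B
    have h3 : (0:ℕ) < 2^B := by positivity
    split <;> omega

lemma rg_cons (B : ℕ) (x : ℕ) :
    rg (B+1) x = Fin.cons (decide (2 ^ B ≤ x))
      (rg B (if x < 2 ^ B then x else 2 ^ (B + 1) - 1 - x)) := rfl

lemma grayVal_rg (B : ℕ) (x : ℕ) (hx : x < 2^B) : grayVal B (rg B x) = x := by
  induction B generalizing x with
  | zero => interval_cases x; simp [grayVal]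
  | succ B ih =>
    have h2 : (2:ℕ)^(B+1) = 2^B * 2 := pow_succ 2 B
    have h3 : (0:ℕ) < 2^B := by positivity
    rw [grayVal_tail, rg_cons]
    have htail : (fun i : Fin B => Fin.cons (α := fun _ => Bool) (decide (2 ^ B ≤ x))
        (rg B (if x < 2 ^ B then x else 2 ^ (B + 1) - 1 - x)) i.succ)
        = rg B (if x < 2 ^ B then x else 2 ^ (B + 1) - 1 - x) := by
      funext i; simp
    rw [Fin.cons_zero, htail]
    by_cases hx' : x < 2^B
    · simp [hx', Nat.not_le.mpr hx', ih x hx']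
    · have hle : 2^B ≤ x := Nat.not_lt.mp hx'
      have : grayVal B (rg B (2^(B+1) - 1 - x)) = 2^(B+1) - 1 - x := ih _ (by omega)
      simp only [hx', if_false, hle, decide_eq_true_eq, decide_true, if_true]
      rw [this]; omega

lemma rg_succ_diff (B : ℕ) (x : ℕ) (hx : x + 1 < 2^B) :
    ∃ k : Fin B, rg B x k ≠ rg B (x+1) k ∧ ∀ l, l ≠ k → rg B x l = rg B (x+1) l := by
  induction B generalizing x with
  | zero => simp at hx
  | succ B ih =>
    have h2 : (2:ℕ)^(B+1) = 2^B * 2 := pow_succ 2 B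
    have h3 : (0:ℕ) < 2^B := by positivity
    rcases lt_trichotomy (x+1) (2^B) with hc | hc | hc
    · obtain ⟨k, hk1, hk2⟩ := ih x hc
      have hx1 : x < 2^B := by omega
      refine ⟨k.succ, ?_, ?_⟩
      · rw [rg_cons, rg_cons]
        simpa [hx1, hc] using hk1
      · intro l hl
        rw [rg_cons, rg_cons]
        rcases Fin.eq_zero_or_eq_succ l with rfl | ⟨m, rfl⟩
        · simp [Nat.not_le.mpr hx1, Nat.not_le.mpr hc]
        · have : m ≠ k := by
            intro h; exact hl (by rw [h])
          simp [hx1, hc, hk2 m this]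
    · -- x + 1 = 2^B
      refine ⟨0, ?_, ?_⟩
      · rw [rg_cons, rg_cons]
        simp [← hc]
      · intro l hl
        rw [rg_cons, rg_cons]
        rcases Fin.eq_zero_or_eq_succ l with rfl | ⟨m, rfl⟩
        · exact absurd rfl hl
        · have hxlt : x < 2^B := by omega
          have hn1 : ¬ (x + 1 < 2^B) := by omega
          have he : 2^(B+1) - 1 - (x+1) = x := by omega
          simp [hxlt, hn1, he]
    · -- 2^B < x+1, i.e. 2^B ≤ x
      have hle : 2^B ≤ x := by omega
      set y := 2^(B+1) - 1 - (x+1) with hy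
      have hy1 : y + 1 = 2^(B+1) - 1 - x := by omega
      have hylt : y + 1 < 2^B := by omega
      have hnx : ¬ x < 2^B := by omega
      have hnx1 : ¬ x + 1 < 2^B := by omega
      obtain ⟨k, hk1, hk2⟩ := ih y hylt
      refine ⟨k.succ, ?_, ?_⟩
      · rw [rg_cons, rg_cons]
        simp only [hnx, hnx1, if_false, Fin.cons_succ]
        rw [← hy1]
        exact fun h => hk1 h.symm
      · intro l hl
        rw [rg_cons, rg_cons]
        rcases Fin.eq_zero_or_eq_succ l with rfl | ⟨m, rfl⟩
        · simp [hle, show 2^B ≤ x+1 by omega]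
        · have : m ≠ k := fun h => hl (by rw [h])
          simp only [hnx, hnx1, if_false, Fin.cons_succ]
          rw [← hy1, (hk2 m this).symm]

/-- Parity of the first `j` bits of `g`. -/
def par (B : ℕ) (g : Fin B → Bool) (j : ℕ) : Bool :=
  (List.range j).foldl (fun p l => if h : l < B then p ^^ g ⟨l, h⟩ else p) false

lemma par_succ (B : ℕ) (g : Fin B → Bool) (j : ℕ) :
    par B g (j+1) = if h : j < B then par B g j ^^ g ⟨j, h⟩ else par B g j := by
  unfold par; rw [List.range_succ, List.foldl_append, List.foldl_cons, List.foldl_nil]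

lemma fsm_succ (B : ℕ) (g h : Fin B → Bool) (j : ℕ) :
    fsmState B g h (j+1) = if hj : j < B then
      diamond (fsmState B g h j) (g ⟨j, hj⟩, h ⟨j, hj⟩) else fsmState B g h j := by
  unfold fsmState; rw [List.range_succ, List.foldl_append, List.foldl_cons, List.foldl_nil]

lemma par_congr (B : ℕ) (g g' : Fin B → Bool) (j : ℕ)
    (hp : ∀ l : Fin B, (l:ℕ) < j → g l = g' l) : par B g j = par B g' j := by
  induction j with
  | zero => rfl
  | succ j ih =>
    rw [par_succ, par_succ]
    have ih' := ih (fun l hl => hp l (by omega))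
    split
    · next hj => rw [ih', hp ⟨j, hj⟩ (by simp)]
    · exact ih'

lemma fsm_congr (B : ℕ) (g h g' h' : Fin B → Bool) (j : ℕ)
    (hp : ∀ l : Fin B, (l:ℕ) < j → g l = g' l)
    (hq : ∀ l : Fin B, (l:ℕ) < j → h l = h' l) :
    fsmState B g h j = fsmState B g' h' j := by
  induction j with
  | zero => rfl
  | succ j ih =>
    rw [fsm_succ, fsm_succ]
    have ih' := ih (fun l hl => hp l (by omega)) (fun l hl => hq l (by omega))
    split
    · next hj => rw [ih', hp ⟨j, hj⟩ (by simp), hq ⟨j, hj⟩ (by simp)]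
    · exact ih'

lemma diamond_same (q a : Bool) : diamond (q, q) (a, a) = (q ^^ a, q ^^ a) := by
  cases q <;> cases a <;> rfl

lemma diamond_diff (q a b : Bool) : diamond (q, q) (a, b) = (a ^^ q, b ^^ q) := by
  cases q <;> cases a <;> cases b <;> rfl

lemma diamond_absorb (c : Bool) (x : Bool × Bool) : diamond (c, !c) x = (c, !c) := by
  cases c <;> rfl

lemma fsm_eq (B : ℕ) (g h : Fin B → Bool) (j : ℕ) (hj : j ≤ B)
    (hp : ∀ l : Fin B, (l:ℕ) < j → g l = h l) :
    fsmState B g h j = (par B g j, par B g j) := by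
  induction j with
  | zero => rfl
  | succ j ih =>
    have hjB : j < B := by omega
    rw [fsm_succ, par_succ, dif_pos hjB, dif_pos hjB,
      ih (by omega) (fun l hl => hp l (by omega)),
      ← hp ⟨j, hjB⟩ (by simp), diamond_same]

lemma fsm_dec (B : ℕ) (g h : Fin B → Bool) (k j : ℕ) (hkB : k < B) (hkj : k < j)
    (hp : ∀ l : Fin B, (l:ℕ) < k → g l = h l) (hne : g ⟨k, hkB⟩ ≠ h ⟨k, hkB⟩) :
    fsmState B g h j = (g ⟨k, hkB⟩ ^^ par B g k, h ⟨k, hkB⟩ ^^ par B g k) := by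
  have hkj' : k + 1 ≤ j := hkj
  induction j, hkj' using Nat.le_induction with
  | base =>
    rw [fsm_succ, dif_pos hkB, fsm_eq B g h k (by omega) hp, diamond_diff]
  | succ j hj ih =>
    rw [fsm_succ, ih (by omega)]
    have hc : (h ⟨k, hkB⟩ ^^ par B g k) = (!(g ⟨k, hkB⟩ ^^ par B g k)) := by
      revert hne; cases g ⟨k, hkB⟩ <;> cases h ⟨k, hkB⟩ <;> cases par B g k <;> simp
    rw [hc]
    split
    · exact diamond_absorb _ _
    · rfl

lemma par_cons (B : ℕ) (g : Fin (B+1) → Bool) (j : ℕ) :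
    par (B+1) g (j+1) = (g 0 ^^ par B (fun i => g i.succ) j) := by
  induction j with
  | zero =>
    rw [par_succ, dif_pos (Nat.succ_pos B)]
    simp [par, Fin.mk_zero]
  | succ j ih =>
    rw [par_succ (B+1) g (j+1), ih, par_succ B (fun i => g i.succ) j]
    by_cases hj : j < B
    · rw [dif_pos (show j + 1 < B + 1 by omega), dif_pos hj, Bool.xor_assoc]
      rfl
    · rw [dif_neg (show ¬ (j + 1 < B + 1) by omega), dif_neg hj]

lemma gray_cmp (B : ℕ) (g h : Fin B → Bool) (k : ℕ) (hk : k < B)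
    (hpre : ∀ l : Fin B, (l:ℕ) < k → g l = h l)
    (hne : g ⟨k, hk⟩ ≠ h ⟨k, hk⟩) :
    (grayVal B h < grayVal B g ↔ (g ⟨k, hk⟩ ^^ par B g k) = true) := by
  induction B generalizing k with
  | zero => omega
  | succ B ih =>
    have hvg := grayVal_lt B (fun i => g i.succ)
    have hvh := grayVal_lt B (fun i => h i.succ)
    have h2 : (2:ℕ)^(B+1) = 2^B * 2 := pow_succ 2 B
    rw [grayVal_tail, grayVal_tail]
    rcases k with _ | k
    · -- k = 0
      have hpar : par (B+1) g 0 = false := rfl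
      have h0 : (⟨0, hk⟩ : Fin (B+1)) = 0 := rfl
      rw [h0] at hne ⊢
      rw [hpar]
      cases hg0 : g 0 <;> cases hh0 : h 0 <;> rw [hg0, hh0] at hne
      · exact absurd rfl hne
      · rw [if_pos rfl, if_neg (show ¬ (false = true) by simp)]
        constructor
        · intro hlt; exact absurd hlt (by omega)
        · intro hx; simp at hx
      · rw [if_neg (show ¬ (false = true) by simp), if_pos rfl]
        constructor
        · intro _; rfl
        · intro _; omega
      · exact absurd rfl hne
    · -- k = k'+1
      have hkB : k < B := by omega
      have h0 : g 0 = h 0 := hpre 0 (by simp)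
      have hpre' : ∀ l : Fin B, (l:ℕ) < k →
          (fun i : Fin B => g i.succ) l = (fun i : Fin B => h i.succ) l := by
        intro l hl
        exact hpre l.succ (by simp; omega)
      have hkeq : (⟨k+1, hk⟩ : Fin (B+1)) = (Fin.succ ⟨k, hkB⟩) := rfl
      have hne' : (fun i : Fin B => g i.succ) ⟨k, hkB⟩ ≠ (fun i : Fin B => h i.succ) ⟨k, hkB⟩ := by
        exact fun he => hne (by rw [hkeq]; exact he)
      have ihg := ih (fun i => g i.succ) (fun i => h i.succ) k hkB hpre' hne'
      have ihh := ih (fun i => h i.succ) (fun i => g i.succ) k hkB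
        (fun l hl => (hpre' l hl).symm) (Ne.symm hne')
      have hparh : par B (fun i : Fin B => h i.succ) k = par B (fun i : Fin B => g i.succ) k :=
        par_congr B _ _ k (fun l hl => (hpre' l hl).symm)
      rw [hparh] at ihh
      have hbit : (fun i : Fin B => h i.succ) ⟨k, hkB⟩ = !((fun i : Fin B => g i.succ) ⟨k, hkB⟩) := by
        revert hne'
        cases (fun i : Fin B => g i.succ) ⟨k, hkB⟩ <;> cases (fun i : Fin B => h i.succ) ⟨k, hkB⟩ <;> simp
      rw [show h (Fin.succ ⟨k, hkB⟩) = !((fun i : Fin B => g i.succ) ⟨k, hkB⟩) from hbit] at ihh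
      rw [par_cons, hkeq, ← h0]
      have hgb : g (Fin.succ ⟨k, hkB⟩) = (fun i : Fin B => g i.succ) ⟨k, hkB⟩ := rfl
      cases hg0 : g 0
      · rw [if_neg (show ¬ (false = true) by simp), if_neg (show ¬ (false = true) by simp)]
        simpa using ihg
      · rw [if_pos rfl, if_pos rfl]
        have hlt : (2^(B+1) - 1 - grayVal B (fun i => h i.succ)
            < 2^(B+1) - 1 - grayVal B (fun i => g i.succ)) ↔
            (grayVal B (fun i => g i.succ) < grayVal B (fun i => h i.succ)) := by omega
        rw [hlt, ihh, hgb]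
        cases hb : (fun i : Fin B => g i.succ) ⟨k, hkB⟩ <;>
          cases hp2 : par B (fun i : Fin B => g i.succ) k <;> simp

lemma gray_tri (B : ℕ) (g h : Fin B → Bool) (k : ℕ) (hk : k < B)
    (hpre : ∀ l : Fin B, (l:ℕ) < k → g l = h l)
    (hne : g ⟨k, hk⟩ ≠ h ⟨k, hk⟩) :
    (grayVal B h < grayVal B g ↔ (g ⟨k, hk⟩ ^^ par B g k) = true) ∧
    (grayVal B g < grayVal B h ↔ (g ⟨k, hk⟩ ^^ par B g k) = false) := by
  refine ⟨gray_cmp B g h k hk hpre hne, ?_⟩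
  have h2 := gray_cmp B h g k hk (fun l hl => (hpre l hl).symm) (Ne.symm hne)
  rw [par_congr B h g k (fun l hl => (hpre l hl).symm)] at h2
  rw [h2]
  cases hg : g ⟨k, hk⟩ <;> cases hh : h ⟨k, hk⟩ <;> cases hq : par B g k <;> simp_all

lemma first_diff (B : ℕ) (g h : Fin B → Bool) (j : ℕ)
    (hnall : ¬ ∀ l : Fin B, (l:ℕ) < j → g l = h l) :
    ∃ k : Fin B, (k:ℕ) < j ∧ g k ≠ h k ∧ ∀ l : Fin B, (l:ℕ) < (k:ℕ) → g l = h l := by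
  push_neg at hnall
  classical
  obtain ⟨l0, hl0j, hl0⟩ := hnall
  let P : ℕ → Prop := fun n => ∃ hn : n < B, g ⟨n, hn⟩ ≠ h ⟨n, hn⟩
  have hP : P l0 := ⟨l0.2, by simpa [Fin.eta] using hl0⟩
  have hex : ∃ n, P n := ⟨l0, hP⟩
  obtain ⟨hn, hne⟩ := Nat.find_spec hex
  refine ⟨⟨Nat.find hex, hn⟩, ?_, hne, ?_⟩
  · show Nat.find hex < j
    have := Nat.find_min' hex hP
    omega
  · intro l hl
    have hm := Nat.find_min hex (show (l:ℕ) < Nat.find hex from hl)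
    by_contra hc
    exact hm ⟨l.2, by simpa [Fin.eta] using hc⟩

lemma stateE (B : ℕ) (g h : Fin B → Bool) (j : ℕ) (hjB : j ≤ B) (q : Bool)
    (hE : fsmState B g h j = (q, q)) :
    (∀ l : Fin B, (l:ℕ) < j → g l = h l) ∧ par B g j = q := by
  by_cases hall : ∀ l : Fin B, (l:ℕ) < j → g l = h l
  · refine ⟨hall, ?_⟩
    rw [fsm_eq B g h j hjB hall] at hE
    exact (Prod.mk.injEq _ _ _ _ ▸ hE).1
  · exfalso
    obtain ⟨k, hkj, hkne, hkpre⟩ := first_diff B g h j hall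
    have hst := fsm_dec B g h (k:ℕ) j k.2 hkj (fun l hl => hkpre l hl)
      (by simpa [Fin.eta] using hkne)
    rw [hst] at hE
    have h1 : (g k ^^ par B g (k:ℕ)) = q := by
      simpa [Fin.eta] using congrArg Prod.fst hE
    have h2 : (h k ^^ par B g (k:ℕ)) = q := by
      simpa [Fin.eta] using congrArg Prod.snd hE
    have h3 := h1.trans h2.symm
    revert h3 hkne
    cases g k <;> cases h k <;> cases par B g (k:ℕ) <;> simp

lemma stateG_val (B : ℕ) (g h : Fin B → Bool) (j : ℕ) (hjB : j ≤ B)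
    (hG : fsmState B g h j = (true, false)) : grayVal B h < grayVal B g := by
  by_cases hall : ∀ l : Fin B, (l:ℕ) < j → g l = h l
  · rw [fsm_eq B g h j hjB hall] at hG
    obtain ⟨h1, h2⟩ := Prod.mk.injEq _ _ _ _ ▸ hG
    rw [h1] at h2; exact absurd h2 (by simp)
  · obtain ⟨k, hkj, hkne, hkpre⟩ := first_diff B g h j hall
    have hkne' : g ⟨(k:ℕ), k.2⟩ ≠ h ⟨(k:ℕ), k.2⟩ := by simpa [Fin.eta] using hkne
    have hst := fsm_dec B g h (k:ℕ) j k.2 hkj (fun l hl => hkpre l hl) hkne'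
    rw [hst] at hG
    obtain ⟨h1, _⟩ := Prod.mk.injEq _ _ _ _ ▸ hG
    exact (gray_tri B g h (k:ℕ) k.2 hkpre hkne').1.mpr h1

lemma stateL_val (B : ℕ) (g h : Fin B → Bool) (j : ℕ) (hjB : j ≤ B)
    (hL : fsmState B g h j = (false, true)) : grayVal B g < grayVal B h := by
  by_cases hall : ∀ l : Fin B, (l:ℕ) < j → g l = h l
  · rw [fsm_eq B g h j hjB hall] at hL
    obtain ⟨h1, h2⟩ := Prod.mk.injEq _ _ _ _ ▸ hL
    rw [h1] at h2; exact absurd h2 (by simp)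
  · obtain ⟨k, hkj, hkne, hkpre⟩ := first_diff B g h j hall
    have hkne' : g ⟨(k:ℕ), k.2⟩ ≠ h ⟨(k:ℕ), k.2⟩ := by simpa [Fin.eta] using hkne
    have hst := fsm_dec B g h (k:ℕ) j k.2 hkj (fun l hl => hkpre l hl) hkne'
    rw [hst] at hL
    obtain ⟨h1, _⟩ := Prod.mk.injEq _ _ _ _ ▸ hL
    exact (gray_tri B g h (k:ℕ) k.2 hkpre hkne').2.mpr h1

lemma maxrg_cases (B : ℕ) (g h : Fin B → Bool) : maxrg B g h = g ∨ maxrg B g h = h := by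
  unfold maxrg; split; exacts [Or.inl rfl, Or.inr rfl]

lemma minrg_cases (B : ℕ) (g h : Fin B → Bool) : minrg B g h = g ∨ minrg B g h = h := by
  unfold minrg; split; exacts [Or.inr rfl, Or.inl rfl]

lemma maxrg_left {B : ℕ} {g h : Fin B → Bool} (hle : grayVal B h ≤ grayVal B g) :
    maxrg B g h = g := if_pos hle

lemma maxrg_right {B : ℕ} {g h : Fin B → Bool} (hlt : grayVal B g < grayVal B h) :
    maxrg B g h = h := if_neg (by omega)

lemma minrg_left {B : ℕ} {g h : Fin B → Bool} (hle : grayVal B h ≤ grayVal B g) :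
    minrg B g h = h := if_pos hle

lemma minrg_right {B : ℕ} {g h : Fin B → Bool} (hlt : grayVal B g < grayVal B h) :
    minrg B g h = g := if_neg (by omega)

lemma out_correct (B : ℕ) (g h : Fin B → Bool) (j : ℕ) (hj : j < B) :
    outOp (fsmState B g h j) (g ⟨j, hj⟩, h ⟨j, hj⟩) =
      (maxrg B g h ⟨j, hj⟩, minrg B g h ⟨j, hj⟩) := by
  by_cases hall : ∀ l : Fin B, (l:ℕ) < j → g l = h l
  · rw [fsm_eq B g h j (le_of_lt hj) hall]
    by_cases hbit : g ⟨j, hj⟩ = h ⟨j, hj⟩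
    · have hmax : maxrg B g h ⟨j, hj⟩ = g ⟨j, hj⟩ := by
        rcases maxrg_cases B g h with hc | hc
        · rw [hc]
        · rw [hc]; exact hbit.symm
      have hmin : minrg B g h ⟨j, hj⟩ = g ⟨j, hj⟩ := by
        rcases minrg_cases B g h with hc | hc
        · rw [hc]
        · rw [hc]; exact hbit.symm
      rw [hmax, hmin, ← hbit]
      cases hq : par B g j <;> cases hga : g ⟨j, hj⟩ <;> rfl
    · have tri := gray_tri B g h j hj hall hbit
      cases hc : (g ⟨j, hj⟩ ^^ par B g j)
      · have hlt : grayVal B g < grayVal B h := tri.2.mpr hc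
        rw [maxrg_right hlt, minrg_right hlt]
        have hq : par B g j = g ⟨j, hj⟩ := by
          revert hc; cases g ⟨j, hj⟩ <;> cases par B g j <;> simp
        rw [hq]
        cases hga : g ⟨j, hj⟩ <;> cases hhb : h ⟨j, hj⟩
        · exact absurd (hga.trans hhb.symm) hbit
        · rfl
        · rfl
        · exact absurd (hga.trans hhb.symm) hbit
      · have hlt : grayVal B h < grayVal B g := tri.1.mpr hc
        rw [maxrg_left (le_of_lt hlt), minrg_left (le_of_lt hlt)]
        have hq : par B g j = !(g ⟨j, hj⟩) := by
          revert hc; cases g ⟨j, hj⟩ <;> cases par B g j <;> simp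
        rw [hq]
        cases hga : g ⟨j, hj⟩ <;> cases hhb : h ⟨j, hj⟩
        · exact absurd (hga.trans hhb.symm) hbit
        · rfl
        · rfl
        · exact absurd (hga.trans hhb.symm) hbit
  · obtain ⟨k, hkj, hkne, hkpre⟩ := first_diff B g h j hall
    have hkne' : g ⟨(k:ℕ), k.2⟩ ≠ h ⟨(k:ℕ), k.2⟩ := by simpa [Fin.eta] using hkne
    have hst := fsm_dec B g h (k:ℕ) j k.2 hkj (fun l hl => hkpre l hl) hkne'
    have tri := gray_tri B g h (k:ℕ) k.2 hkpre hkne'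
    cases hc : (g ⟨(k:ℕ), k.2⟩ ^^ par B g (k:ℕ))
    · have hh2 : (h ⟨(k:ℕ), k.2⟩ ^^ par B g (k:ℕ)) = true := by
        revert hc hkne'
        cases g ⟨(k:ℕ), k.2⟩ <;> cases h ⟨(k:ℕ), k.2⟩ <;> cases par B g (k:ℕ) <;> simp
      rw [hc, hh2] at hst
      have hlt : grayVal B g < grayVal B h := tri.2.mpr hc
      rw [maxrg_right hlt, minrg_right hlt, hst]
      rfl
    · have hh2 : (h ⟨(k:ℕ), k.2⟩ ^^ par B g (k:ℕ)) = false := by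
        revert hc hkne'
        cases g ⟨(k:ℕ), k.2⟩ <;> cases h ⟨(k:ℕ), k.2⟩ <;> cases par B g (k:ℕ) <;> simp
      rw [hc, hh2] at hst
      have hlt : grayVal B h < grayVal B g := tri.1.mpr hc
      rw [maxrg_left (le_of_lt hlt), minrg_left (le_of_lt hlt), hst]
      rfl

lemma res_valid (B : ℕ) (g : Fin B → KBit) (hg : g ∈ Valid B) :
    ∃ x x' : ℕ, x ≤ x' ∧ x' ≤ x + 1 ∧ x' < 2^B ∧
      (∀ y, y ∈ res g ↔ (y = rg B x ∨ y = rg B x')) ∧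
      (∀ i : Fin B, g i = if rg B x i = rg B x' i then some (rg B x i) else none) := by
  rcases hg with ⟨x, hxB, rfl⟩ | ⟨x, hxB, rfl⟩
  · refine ⟨x, x, le_refl _, by omega, hxB, ?_, ?_⟩
    · intro y
      constructor
      · intro hy; left; funext i; exact hy i _ rfl
      · rintro (rfl | rfl) <;> intro i b hb <;> exact Option.some_inj.mp hb
    · intro i; simp [stableStr]
  · refine ⟨x, x+1, by omega, le_refl _, hxB, ?_, fun i => rfl⟩
    obtain ⟨k, hk1, hk2⟩ := rg_succ_diff B x hxB
    intro y
    constructor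
    · intro hy
      by_cases hyk : y k = rg B x k
      · left; funext i
        by_cases hik : i = k
        · rw [hik]; exact hyk
        · exact hy i _ (by simp [superStr, hk2 i hik])
      · right; funext i
        by_cases hik : i = k
        · rw [hik]
          revert hyk hk1; cases y k <;> cases rg B x k <;> cases rg B (x+1) k <;> simp
        · rw [hy i (rg B x i) (by simp [superStr, hk2 i hik]), hk2 i hik]
    · rintro (rfl | rfl) <;> intro i b hb <;> unfold superStr at hb
      · split at hb
        · exact Option.some_inj.mp hb
        · exact absurd hb (by simp)
      · split at hb
        · next heq =>
            rw [← Option.some_inj.mp hb, ← heq]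
          
        · exact absurd hb (by simp)

open Classical in
lemma supP_fst (S : Set (Bool × Bool)) :
    (supP S).1 = if ∀ s ∈ S, s.1 = true then some true
      else if ∀ s ∈ S, s.1 = false then some false else none := rfl

open Classical in
lemma supP_snd (S : Set (Bool × Bool)) :
    (supP S).2 = if ∀ s ∈ S, s.2 = true then some true
      else if ∀ s ∈ S, s.2 = false then some false else none := rfl

lemma mem_resP_supP (S : Set (Bool × Bool)) {s : Bool × Bool} (hs : s ∈ S) :
    s ∈ resP (supP S) := by
  constructor
  · intro b hb
    rw [supP_fst] at hb
    split_ifs at hb with h1 h2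
    · rw [h1 s hs]; exact Option.some_inj.mp hb
    · rw [h2 s hs]; exact Option.some_inj.mp hb
  · intro b hb
    rw [supP_snd] at hb
    split_ifs at hb with h1 h2
    · rw [h1 s hs]; exact Option.some_inj.mp hb
    · rw [h2 s hs]; exact Option.some_inj.mp hb

lemma resP_supP_cases (S : Set (Bool × Bool)) (hne : S.Nonempty) (s : Bool × Bool)
    (hs : s ∈ resP (supP S)) :
    s ∈ S ∨ ((∃ t ∈ S, t.1 = true) ∧ (∃ t ∈ S, t.1 = false) ∧
             (∃ t ∈ S, t.2 = true) ∧ (∃ t ∈ S, t.2 = false)) := by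
  classical
  obtain ⟨hs1, hs2⟩ := hs
  have H1 : (∀ t ∈ S, t.1 = s.1) ∨ ((∃ t ∈ S, t.1 = true) ∧ (∃ t ∈ S, t.1 = false)) := by
    by_cases c1 : ∀ t ∈ S, (t : Bool × Bool).1 = true
    · left
      have hb := hs1 true (by rw [supP_fst, if_pos c1])
      intro t ht; rw [c1 t ht, hb]
    · by_cases c2 : ∀ t ∈ S, (t : Bool × Bool).1 = false
      · left
        have hb := hs1 false (by rw [supP_fst, if_neg c1, if_pos c2])
        intro t ht; rw [c2 t ht, hb]
      · right
        push_neg at c1 c2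
        obtain ⟨t1, ht1, he1⟩ := c1
        obtain ⟨t2, ht2, he2⟩ := c2
        refine ⟨⟨t2, ht2, ?_⟩, ⟨t1, ht1, ?_⟩⟩
        · revert he2; cases t2.1 <;> simp
        · revert he1; cases t1.1 <;> simp
  have H2 : (∀ t ∈ S, t.2 = s.2) ∨ ((∃ t ∈ S, t.2 = true) ∧ (∃ t ∈ S, t.2 = false)) := by
    by_cases c1 : ∀ t ∈ S, (t : Bool × Bool).2 = true
    · left
      have hb := hs2 true (by rw [supP_snd, if_pos c1])
      intro t ht; rw [c1 t ht, hb]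
    · by_cases c2 : ∀ t ∈ S, (t : Bool × Bool).2 = false
      · left
        have hb := hs2 false (by rw [supP_snd, if_neg c1, if_pos c2])
        intro t ht; rw [c2 t ht, hb]
      · right
        push_neg at c1 c2
        obtain ⟨t1, ht1, he1⟩ := c1
        obtain ⟨t2, ht2, he2⟩ := c2
        refine ⟨⟨t2, ht2, ?_⟩, ⟨t1, ht1, ?_⟩⟩
        · revert he2; cases t2.2 <;> simp
        · revert he1; cases t1.2 <;> simp
  rcases H1 with h1 | h1
  · rcases H2 with h2 | h2
    · obtain ⟨t, ht⟩ := hne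
      left
      have : t = s := Prod.ext (h1 t ht) (h2 t ht)
      rwa [← this]
    · left
      obtain ⟨⟨t3, ht3, he3⟩, ⟨t4, ht4, he4⟩⟩ := h2
      cases hsv : s.2
      · have : t4 = s := Prod.ext (h1 t4 ht4) (he4.trans hsv.symm)
        rwa [← this]
      · have : t3 = s := Prod.ext (h1 t3 ht3) (he3.trans hsv.symm)
        rwa [← this]
  · rcases H2 with h2 | h2
    · left
      obtain ⟨⟨t3, ht3, he3⟩, ⟨t4, ht4, he4⟩⟩ := h1
      cases hsv : s.1
      · have : t4 = s := Prod.ext (he4.trans hsv.symm) (h2 t4 ht4)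
        rwa [← this]
      · have : t3 = s := Prod.ext (he3.trans hsv.symm) (h2 t3 ht3)
        rwa [← this]
    · right
      exact ⟨h1.1, h1.2, h2.1, h2.2⟩

lemma conflict_states (S : Set (Bool × Bool))
    (h1t : ∃ t ∈ S, t.1 = true) (h1f : ∃ t ∈ S, t.1 = false)
    (h2t : ∃ t ∈ S, t.2 = true) (h2f : ∃ t ∈ S, t.2 = false) :
    ((false, false) ∈ S ∧ (true, true) ∈ S) ∨ ((true, false) ∈ S ∧ (false, true) ∈ S) := by
  obtain ⟨t1, ht1, he1⟩ := h1t
  obtain ⟨t2, ht2, he2⟩ := h1f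
  obtain ⟨t3, ht3, he3⟩ := h2t
  obtain ⟨t4, ht4, he4⟩ := h2f
  by_cases hG : (true, false) ∈ S <;> by_cases hL : (false, true) ∈ S
  · exact Or.inr ⟨hG, hL⟩
  · -- hG, ¬hL
    left
    constructor
    · have : t2 = (false, t2.2) := Prod.ext he2 rfl
      rw [this] at ht2
      cases h22 : t2.2
      · rwa [h22] at ht2
      · rw [h22] at ht2; exact absurd ht2 hL
    · have : t3 = (t3.1, true) := Prod.ext rfl he3
      rw [this] at ht3
      cases h31 : t3.1
      · rw [h31] at ht3; exact absurd ht3 hL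
      · rwa [h31] at ht3
  · -- ¬hG, hL
    left
    constructor
    · have : t4 = (t4.1, false) := Prod.ext rfl he4
      rw [this] at ht4
      cases h41 : t4.1
      · rwa [h41] at ht4
      · rw [h41] at ht4; exact absurd ht4 hG
    · have : t1 = (true, t1.2) := Prod.ext he1 rfl
      rw [this] at ht1
      cases h12 : t1.2
      · rw [h12] at ht1; exact absurd ht1 hG
      · rwa [h12] at ht1
  · -- neither
    left
    constructor
    · have : t2 = (false, t2.2) := Prod.ext he2 rfl
      rw [this] at ht2
      cases h22 : t2.2
      · rwa [h22] at ht2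
      · rw [h22] at ht2; exact absurd ht2 hL
    · have : t1 = (true, t1.2) := Prod.ext he1 rfl
      rw [this] at ht1
      cases h12 : t1.2
      · rw [h12] at ht1; exact absurd ht1 hG
      · rwa [h12] at ht1

lemma outOp_diag (s : Bool × Bool) (b : Bool) : outOp s (b, b) = (b, b) := by
  obtain ⟨a, c⟩ := s
  cases a <;> cases c <;> cases b <;> rfl

lemma conflict_GL (B x x' y y' : ℕ) (hxx : x ≤ x') (hx1 : x' ≤ x + 1) (hxB : x' < 2^B)
    (hyy : y ≤ y') (hy1 : y' ≤ y + 1) (hyB : y' < 2^B) (j : ℕ) (hj : j < B)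
    (u1 v1 u2 v2 : ℕ)
    (hu1 : u1 = x ∨ u1 = x') (hv1 : v1 = y ∨ v1 = y')
    (hu2 : u2 = x ∨ u2 = x') (hv2 : v2 = y ∨ v2 = y')
    (hG : fsmState B (rg B u1) (rg B v1) j = (true, false))
    (hL : fsmState B (rg B u2) (rg B v2) j = (false, true)) :
    x = y ∧ x' = x + 1 ∧ y' = y + 1 ∧ rg B x ⟨j, hj⟩ = rg B x' ⟨j, hj⟩ := by
  have hv1u1 : v1 < u1 := by
    have hgt := stateG_val B _ _ j (le_of_lt hj) hG
    rwa [grayVal_rg B u1 (by rcases hu1 with rfl | rfl <;> omega),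
      grayVal_rg B v1 (by rcases hv1 with rfl | rfl <;> omega)] at hgt
  have hu2v2 : u2 < v2 := by
    have hlt := stateL_val B _ _ j (le_of_lt hj) hL
    rwa [grayVal_rg B u2 (by rcases hu2 with rfl | rfl <;> omega),
      grayVal_rg B v2 (by rcases hv2 with rfl | rfl <;> omega)] at hlt
  have hcase : u1 = x + 1 ∧ v1 = x ∧ x = y ∧ x' = x + 1 ∧ y' = y + 1 := by
    rcases hu1 with rfl | rfl <;> rcases hv1 with rfl | rfl <;>
      rcases hu2 with rfl | rfl <;> rcases hv2 with rfl | rfl <;> omega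
  obtain ⟨hu1e, hv1e, hxy, hx'e, hy'e⟩ := hcase
  refine ⟨hxy, hx'e, hy'e, ?_⟩
  rw [hu1e, hv1e] at hG
  obtain ⟨k, hk1, hk2⟩ := rg_succ_diff B x (by omega)
  have hnall : ¬ ∀ l : Fin B, (l:ℕ) < j → rg B (x+1) l = rg B x l := by
    intro hall
    rw [fsm_eq B _ _ j (le_of_lt hj) hall] at hG
    have h1 : par B (rg B (x+1)) j = true := by simpa using congrArg Prod.fst hG
    have h2 : par B (rg B (x+1)) j = false := by simpa using congrArg Prod.snd hG
    rw [h1] at h2; exact absurd h2 (by simp)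
  push_neg at hnall
  obtain ⟨l, hlj, hlne⟩ := hnall
  have hlk : l = k := by
    by_contra hc
    exact hlne (hk2 l hc).symm
  rw [hx'e]
  refine hk2 ⟨j, hj⟩ ?_
  intro he
  have : (k : ℕ) = j := by rw [← he]
  rw [← hlk] at this
  omega

lemma conflict_E (B x x' y y' : ℕ) (hxx : x ≤ x') (hx1 : x' ≤ x + 1) (hxB : x' < 2^B)
    (hyy : y ≤ y') (hy1 : y' ≤ y + 1) (hyB : y' < 2^B) (j : ℕ) (hj : j < B)
    (u1 v1 u2 v2 : ℕ)
    (hu1 : u1 = x ∨ u1 = x') (hv1 : v1 = y ∨ v1 = y')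
    (hu2 : u2 = x ∨ u2 = x') (hv2 : v2 = y ∨ v2 = y')
    (hE0 : fsmState B (rg B u1) (rg B v1) j = (false, false))
    (hE1 : fsmState B (rg B u2) (rg B v2) j = (true, true)) :
    x = y ∧ x' = x + 1 ∧ y' = y + 1 ∧ rg B x ⟨j, hj⟩ = rg B x' ⟨j, hj⟩ := by
  obtain ⟨P1, q1⟩ := stateE B _ _ j (le_of_lt hj) false hE0
  obtain ⟨P2, q2⟩ := stateE B _ _ j (le_of_lt hj) true hE1
  have huu : u1 ≠ u2 := by
    rintro rfl
    rw [q1] at q2; exact absurd q2 (by simp)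
  have qv1 : par B (rg B v1) j = false := by
    rw [← par_congr B (rg B u1) (rg B v1) j (fun l hl => P1 l hl)]; exact q1
  have qv2 : par B (rg B v2) j = true := by
    rw [← par_congr B (rg B u2) (rg B v2) j (fun l hl => P2 l hl)]; exact q2
  have hvv : v1 ≠ v2 := by
    rintro rfl
    rw [qv1] at qv2; exact absurd qv2 (by simp)
  have hx'e : x' = x + 1 := by rcases hu1 with rfl | rfl <;> rcases hu2 with rfl | rfl <;> omega
  have hy'e : y' = y + 1 := by rcases hv1 with rfl | rfl <;> rcases hv2 with rfl | rfl <;> omega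
  obtain ⟨kg, hkg1, hkg2⟩ := rg_succ_diff B x (by omega)
  obtain ⟨kh, hkh1, hkh2⟩ := rg_succ_diff B y (by omega)
  have hgd : ∀ l : Fin B, l ≠ kg → rg B u1 l = rg B u2 l := by
    rcases hu1 with rfl | rfl <;> rcases hu2 with rfl | rfl
    · exact absurd rfl huu
    · intro l hl; rw [hx'e]; exact hkg2 l hl
    · intro l hl; rw [hx'e]; exact (hkg2 l hl).symm
    · exact absurd rfl huu
  have hgne : rg B u1 kg ≠ rg B u2 kg := by
    rcases hu1 with rfl | rfl <;> rcases hu2 with rfl | rfl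
    · exact absurd rfl huu
    · rw [hx'e]; exact hkg1
    · rw [hx'e]; exact (Ne.symm hkg1)
    · exact absurd rfl huu
  have hhd : ∀ l : Fin B, l ≠ kh → rg B v1 l = rg B v2 l := by
    rcases hv1 with rfl | rfl <;> rcases hv2 with rfl | rfl
    · exact absurd rfl hvv
    · intro l hl; rw [hy'e]; exact hkh2 l hl
    · intro l hl; rw [hy'e]; exact (hkh2 l hl).symm
    · exact absurd rfl hvv
  have hhne : rg B v1 kh ≠ rg B v2 kh := by
    rcases hv1 with rfl | rfl <;> rcases hv2 with rfl | rfl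
    · exact absurd rfl hvv
    · rw [hy'e]; exact hkh1
    · rw [hy'e]; exact (Ne.symm hkh1)
    · exact absurd rfl hvv
  have hkgj : (kg:ℕ) < j := by
    by_contra hc
    have heq : par B (rg B u1) j = par B (rg B u2) j := by
      refine par_congr B _ _ j (fun l hl => hgd l ?_)
      intro he; rw [he] at hl; omega
    rw [q1] at heq; rw [← heq] at q2; exact absurd q2 (by simp)
  have hkhj : (kh:ℕ) < j := by
    by_contra hc
    have heq : par B (rg B v1) j = par B (rg B v2) j := by
      refine par_congr B _ _ j (fun l hl => hhd l ?_)
      intro he; rw [he] at hl; omega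
    rw [qv1] at heq; rw [← heq] at qv2; exact absurd qv2 (by simp)
  have hkk : kg = kh := by
    by_contra hc
    have : rg B u1 kg = rg B u2 kg :=
      (P1 kg hkgj).trans ((hhd kg hc).trans (P2 kg hkgj).symm)
    exact hgne this
  have hpre12 : ∀ l : Fin B, (l:ℕ) < (kg:ℕ) → rg B u1 l = rg B v2 l := by
    intro l hl
    have hlj : (l:ℕ) < j := by omega
    rw [P1 l hlj]
    refine hhd l ?_
    intro he
    rw [he, ← hkk] at hl
    exact absurd hl (lt_irrefl _)
  have hne12 : rg B u1 kg ≠ rg B v2 kg := by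
    rw [P1 kg hkgj, hkk]
    exact hhne
  have hpre21 : ∀ l : Fin B, (l:ℕ) < (kg:ℕ) → rg B u2 l = rg B v1 l := by
    intro l hl
    have hlj : (l:ℕ) < j := by omega
    rw [← hgd l (fun he => by rw [he] at hl; exact absurd hl (lt_irrefl _))]
    exact P1 l hlj
  have hne21 : rg B u2 kg ≠ rg B v1 kg := by
    intro he
    exact hgne ((P1 kg hkgj).trans he.symm)
  have hq21 : par B (rg B u2) (kg:ℕ) = par B (rg B u1) (kg:ℕ) :=
    par_congr B _ _ _
      (fun l hl => (hgd l (fun he => by rw [he] at hl; exact absurd hl (lt_irrefl _))).symm)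
  have hs12 := fsm_dec B (rg B u1) (rg B v2) (kg:ℕ) j kg.2 hkgj
      (fun l hl => hpre12 l hl) (by simpa [Fin.eta] using hne12)
  have hs21 := fsm_dec B (rg B u2) (rg B v1) (kg:ℕ) j kg.2 hkgj
      (fun l hl => hpre21 l hl) (by simpa [Fin.eta] using hne21)
  simp only [Fin.eta] at hs12 hs21
  rw [hq21] at hs21
  have hb12 : rg B v2 kg = !(rg B u1 kg) := by
    revert hne12; cases rg B u1 kg <;> cases rg B v2 kg <;> simp
  have hb21u : rg B u2 kg = !(rg B u1 kg) := by
    revert hgne; cases rg B u1 kg <;> cases rg B u2 kg <;> simp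
  have hb21v : rg B v1 kg = rg B u1 kg := (P1 kg hkgj).symm
  rw [hb12] at hs12
  rw [hb21u, hb21v] at hs21
  have hnx : ∀ a b : Bool, ((!a) ^^ b) = !(a ^^ b) := by decide
  rw [hnx] at hs12 hs21
  cases hc : (rg B u1 kg ^^ par B (rg B u1) (kg:ℕ)) <;> rw [hc] at hs12 hs21 <;>
    simp only [Bool.not_false, Bool.not_true] at hs12 hs21
  · exact conflict_GL B x x' y y' hxx hx1 hxB hyy hy1 hyB j hj u2 v1 u1 v2
      hu2 hv1 hu1 hv2 hs21 hs12
  · exact conflict_GL B x x' y y' hxx hx1 hxB hyy hy1 hyB j hj u1 v2 u2 v1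
      hu1 hv2 hu2 hv1 hs12 hs21

lemma rg_pair_dich (B x x' : ℕ) (hxx : x ≤ x') (hx1 : x' ≤ x + 1) (hxB : x' < 2^B)
    (j : ℕ) (hj : j < B) :
    rg B x ⟨j, hj⟩ = rg B x' ⟨j, hj⟩ ∨ (∀ l : Fin B, (l:ℕ) < j → rg B x l = rg B x' l) := by
  rcases eq_or_lt_of_le hxx with rfl | hlt
  · exact Or.inl rfl
  · have hx'e : x' = x + 1 := by omega
    subst hx'e
    obtain ⟨k, hk1, hk2⟩ := rg_succ_diff B x hxB
    by_cases hkj : (k:ℕ) = j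
    · right; intro l hl
      refine hk2 l ?_
      intro he; rw [he] at hl; omega
    · left
      refine hk2 ⟨j, hj⟩ ?_
      intro he
      exact hkj (by rw [← he])

lemma my_ite_congr {c1 c2 : Prop} [Decidable c1] [Decidable c2] {α : Sort*} (a b : α)
    (h : c1 ↔ c2) : (if c1 then a else b) = if c2 then a else b := by
  by_cases hc : c2
  · rw [if_pos (h.mpr hc), if_pos hc]
  · rw [if_neg (fun hx => hc (h.mp hx)), if_neg hc]

lemma main_correct (B : ℕ) (g h : Fin B → KBit) (hg : g ∈ Valid B) (hh : h ∈ Valid B)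
    (j : ℕ) (hj : j < B) :
    outM (sM B g h j) (g ⟨j, hj⟩, h ⟨j, hj⟩) =
      (maxrgM B g h ⟨j, hj⟩, minrgM B g h ⟨j, hj⟩) := by
  classical
  obtain ⟨x, x', hxx, hx1, hxB, hresg, hbitg⟩ := res_valid B g hg
  obtain ⟨y, y', hyy, hy1, hyB, hresh, hbith⟩ := res_valid B h hh
  set jf : Fin B := ⟨j, hj⟩ with hjf
  set S : Set (Bool × Bool) := {s | ∃ g' ∈ res g, ∃ h' ∈ res h, s = fsmState B g' h' j}
    with hS
  have hSne : S.Nonempty := ⟨fsmState B (rg B x) (rg B y) j,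
    ⟨rg B x, (hresg _).mpr (Or.inl rfl), rg B y, (hresh _).mpr (Or.inl rfl), rfl⟩⟩
  set R : Set (Bool × Bool) := {z | ∃ g' ∈ res g, ∃ h' ∈ res h,
    z = (maxrg B g' h' jf, minrg B g' h' jf)} with hR
  set T : Set (Bool × Bool) := {z | ∃ s' ∈ resP (sM B g h j), ∃ p ∈ resP (g jf, h jf),
    z = outOp s' p} with hT
  have hLHS : outM (sM B g h j) (g jf, h jf) = supP T := rfl
  have hTR : T = R := by
    apply Set.Subset.antisymm
    · rintro z ⟨s', hs', p, hp, rfl⟩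
      obtain ⟨u, hu, hpu⟩ : ∃ u, (u = x ∨ u = x') ∧ p.1 = rg B u jf := by
        have hb := hbitg jf
        by_cases hsame : rg B x jf = rg B x' jf
        · exact ⟨x, Or.inl rfl, hp.1 (rg B x jf) (by rw [hb, if_pos hsame])⟩
        · by_cases hpx : p.1 = rg B x jf
          · exact ⟨x, Or.inl rfl, hpx⟩
          · refine ⟨x', Or.inr rfl, ?_⟩
            revert hpx hsame; cases p.1 <;> cases rg B x jf <;> cases rg B x' jf <;> simp
      obtain ⟨v, hv, hpv⟩ : ∃ v, (v = y ∨ v = y') ∧ p.2 = rg B v jf := by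
        have hb := hbith jf
        by_cases hsame : rg B y jf = rg B y' jf
        · exact ⟨y, Or.inl rfl, hp.2 (rg B y jf) (by rw [hb, if_pos hsame])⟩
        · by_cases hpy : p.2 = rg B y jf
          · exact ⟨y, Or.inl rfl, hpy⟩
          · refine ⟨y', Or.inr rfl, ?_⟩
            revert hpy hsame; cases p.2 <;> cases rg B y jf <;> cases rg B y' jf <;> simp
      rcases resP_supP_cases S hSne s' hs' with hmem | ⟨h1t, h1f, h2t, h2f⟩
      · obtain ⟨g0, hg0, h0, hh0, hseq⟩ := hmem
        obtain ⟨u0, hu0, rfl⟩ : ∃ u0, (u0 = x ∨ u0 = x') ∧ g0 = rg B u0 := by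
          rcases (hresg g0).mp hg0 with rfl | rfl
          exacts [⟨x, Or.inl rfl, rfl⟩, ⟨x', Or.inr rfl, rfl⟩]
        obtain ⟨v0, hv0, rfl⟩ : ∃ v0, (v0 = y ∨ v0 = y') ∧ h0 = rg B v0 := by
          rcases (hresh h0).mp hh0 with rfl | rfl
          exacts [⟨y, Or.inl rfl, rfl⟩, ⟨y', Or.inr rfl, rfl⟩]
        obtain ⟨u1, hu1, hbu1, hsu1⟩ : ∃ u1, (u1 = x ∨ u1 = x') ∧ rg B u1 jf = p.1 ∧
            fsmState B (rg B u1) (rg B v0) j = fsmState B (rg B u0) (rg B v0) j := by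
          rcases rg_pair_dich B x x' hxx hx1 hxB j hj with hsame | hpre
          · refine ⟨u0, hu0, ?_, rfl⟩
            rw [hpu]
            rcases hu with rfl | rfl <;> rcases hu0 with rfl | rfl <;>
              first | rfl | exact hsame.symm | exact hsame
          · refine ⟨u, hu, hpu.symm, ?_⟩
            refine fsm_congr B _ _ _ _ j ?_ (fun l hl => rfl)
            intro l hl
            rcases hu with rfl | rfl <;> rcases hu0 with rfl | rfl <;>
              first | rfl | exact (hpre l hl) | exact (hpre l hl).symm
        obtain ⟨v1, hv1, hbv1, hsv1⟩ : ∃ v1, (v1 = y ∨ v1 = y') ∧ rg B v1 jf = p.2 ∧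
            fsmState B (rg B u1) (rg B v1) j = fsmState B (rg B u1) (rg B v0) j := by
          rcases rg_pair_dich B y y' hyy hy1 hyB j hj with hsame | hpre
          · refine ⟨v0, hv0, ?_, rfl⟩
            rw [hpv]
            rcases hv with rfl | rfl <;> rcases hv0 with rfl | rfl <;>
              first | rfl | exact hsame.symm | exact hsame
          · refine ⟨v, hv, hpv.symm, ?_⟩
            refine fsm_congr B _ _ _ _ j (fun l hl => rfl) ?_
            intro l hl
            rcases hv with rfl | rfl <;> rcases hv0 with rfl | rfl <;>
              first | rfl | exact (hpre l hl) | exact (hpre l hl).symm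
        have hz : outOp s' p =
            (maxrg B (rg B u1) (rg B v1) jf, minrg B (rg B u1) (rg B v1) jf) := by
          have hp' : p = (rg B u1 jf, rg B v1 jf) := Prod.ext hbu1.symm hbv1.symm
          rw [hseq, ← hsu1, ← hsv1, hp']
          exact out_correct B (rg B u1) (rg B v1) j hj
        rw [hz]
        refine ⟨rg B u1, (hresg _).mpr ?_, rg B v1, (hresh _).mpr ?_, rfl⟩
        · rcases hu1 with rfl | rfl; exacts [Or.inl rfl, Or.inr rfl]
        · rcases hv1 with rfl | rfl; exacts [Or.inl rfl, Or.inr rfl]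
      · have hconf := conflict_states S h1t h1f h2t h2f
        have key : x = y ∧ x' = x + 1 ∧ y' = y + 1 ∧ rg B x jf = rg B x' jf := by
          rcases hconf with ⟨hE0, hE1⟩ | ⟨hG, hL⟩
          · obtain ⟨g0, hg0, h0, hh0, he0⟩ := hE0
            obtain ⟨g1, hg1, h1, hh1, he1⟩ := hE1
            obtain ⟨u1, hu1, rfl⟩ : ∃ u1, (u1 = x ∨ u1 = x') ∧ g0 = rg B u1 := by
              rcases (hresg g0).mp hg0 with rfl | rfl
              exacts [⟨x, Or.inl rfl, rfl⟩, ⟨x', Or.inr rfl, rfl⟩]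
            obtain ⟨v1, hv1, rfl⟩ : ∃ v1, (v1 = y ∨ v1 = y') ∧ h0 = rg B v1 := by
              rcases (hresh h0).mp hh0 with rfl | rfl
              exacts [⟨y, Or.inl rfl, rfl⟩, ⟨y', Or.inr rfl, rfl⟩]
            obtain ⟨u2, hu2, rfl⟩ : ∃ u2, (u2 = x ∨ u2 = x') ∧ g1 = rg B u2 := by
              rcases (hresg g1).mp hg1 with rfl | rfl
              exacts [⟨x, Or.inl rfl, rfl⟩, ⟨x', Or.inr rfl, rfl⟩]
            obtain ⟨v2, hv2, rfl⟩ : ∃ v2, (v2 = y ∨ v2 = y') ∧ h1 = rg B v2 := by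
              rcases (hresh h1).mp hh1 with rfl | rfl
              exacts [⟨y, Or.inl rfl, rfl⟩, ⟨y', Or.inr rfl, rfl⟩]
            exact conflict_E B x x' y y' hxx hx1 hxB hyy hy1 hyB j hj u1 v1 u2 v2
              hu1 hv1 hu2 hv2 he0.symm he1.symm
          · obtain ⟨g0, hg0, h0, hh0, he0⟩ := hG
            obtain ⟨g1, hg1, h1, hh1, he1⟩ := hL
            obtain ⟨u1, hu1, rfl⟩ : ∃ u1, (u1 = x ∨ u1 = x') ∧ g0 = rg B u1 := by
              rcases (hresg g0).mp hg0 with rfl | rfl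
              exacts [⟨x, Or.inl rfl, rfl⟩, ⟨x', Or.inr rfl, rfl⟩]
            obtain ⟨v1, hv1, rfl⟩ : ∃ v1, (v1 = y ∨ v1 = y') ∧ h0 = rg B v1 := by
              rcases (hresh h0).mp hh0 with rfl | rfl
              exacts [⟨y, Or.inl rfl, rfl⟩, ⟨y', Or.inr rfl, rfl⟩]
            obtain ⟨u2, hu2, rfl⟩ : ∃ u2, (u2 = x ∨ u2 = x') ∧ g1 = rg B u2 := by
              rcases (hresg g1).mp hg1 with rfl | rfl
              exacts [⟨x, Or.inl rfl, rfl⟩, ⟨x', Or.inr rfl, rfl⟩]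
            obtain ⟨v2, hv2, rfl⟩ : ∃ v2, (v2 = y ∨ v2 = y') ∧ h1 = rg B v2 := by
              rcases (hresh h1).mp hh1 with rfl | rfl
              exacts [⟨y, Or.inl rfl, rfl⟩, ⟨y', Or.inr rfl, rfl⟩]
            exact conflict_GL B x x' y y' hxx hx1 hxB hyy hy1 hyB j hj u1 v1 u2 v2
              hu1 hv1 hu2 hv2 he0.symm he1.symm
        obtain ⟨hxy, hx'e, hy'e, hbit⟩ := key
        have hp1 : p.1 = rg B x jf := by
          rcases hu with rfl | rfl
          · exact hpu
          · rw [hpu]; exact hbit.symm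
        have hp2 : p.2 = rg B x jf := by
          rcases hv with rfl | rfl
          · rw [hpv, ← hxy]
          · rw [hpv, hy'e, ← hxy, ← hx'e]; exact hbit.symm
        have hpp : p = (rg B x jf, rg B x jf) := Prod.ext hp1 hp2
        rw [hpp, outOp_diag]
        refine ⟨rg B x, (hresg _).mpr (Or.inl rfl), rg B y, (hresh _).mpr (Or.inl rfl), ?_⟩
        have hyx : rg B y = rg B x := by rw [hxy]
        rw [hyx, maxrg_left (le_refl _), minrg_left (le_refl _)]
    · rintro z ⟨g', hg', h', hh', rfl⟩
      refine ⟨fsmState B g' h' j, mem_resP_supP S ⟨g', hg', h', hh', rfl⟩,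
        (g' jf, h' jf), ⟨fun b hb => hg' jf b hb, fun b hb => hh' jf b hb⟩, ?_⟩
      exact (out_correct B g' h' j hj).symm
  rw [hLHS, hTR]
  have e1 : (∀ z ∈ R, z.1 = true) ↔
      (∀ w ∈ {z | ∃ g' ∈ res g, ∃ h' ∈ res h, z = maxrg B g' h'}, w jf = true) := by
    constructor
    · rintro H w ⟨g', hg', h', hh', rfl⟩
      exact H _ ⟨g', hg', h', hh', rfl⟩
    · rintro H z ⟨g', hg', h', hh', rfl⟩
      exact H _ ⟨g', hg', h', hh', rfl⟩
  have e2 : (∀ z ∈ R, z.1 = false) ↔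
      (∀ w ∈ {z | ∃ g' ∈ res g, ∃ h' ∈ res h, z = maxrg B g' h'}, w jf = false) := by
    constructor
    · rintro H w ⟨g', hg', h', hh', rfl⟩
      exact H _ ⟨g', hg', h', hh', rfl⟩
    · rintro H z ⟨g', hg', h', hh', rfl⟩
      exact H _ ⟨g', hg', h', hh', rfl⟩
  have e3 : (∀ z ∈ R, z.2 = true) ↔
      (∀ w ∈ {z | ∃ g' ∈ res g, ∃ h' ∈ res h, z = minrg B g' h'}, w jf = true) := by
    constructor
    · rintro H w ⟨g', hg', h', hh', rfl⟩
      exact H _ ⟨g', hg', h', hh', rfl⟩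
    · rintro H z ⟨g', hg', h', hh', rfl⟩
      exact H _ ⟨g', hg', h', hh', rfl⟩
  have e4 : (∀ z ∈ R, z.2 = false) ↔
      (∀ w ∈ {z | ∃ g' ∈ res g, ∃ h' ∈ res h, z = minrg B g' h'}, w jf = false) := by
    constructor
    · rintro H w ⟨g', hg', h', hh', rfl⟩
      exact H _ ⟨g', hg', h', hh', rfl⟩
    · rintro H z ⟨g', hg', h', hh', rfl⟩
      exact H _ ⟨g', hg', h', hh', rfl⟩
  refine Prod.ext ?_ ?_
  · rw [supP_fst]
    rw [show maxrgM B g h jf =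
      supStr {z | ∃ g' ∈ res g, ∃ h' ∈ res h, z = maxrg B g' h'} jf from rfl]
    unfold supStr
    by_cases c1 : ∀ w ∈ {z | ∃ g' ∈ res g, ∃ h' ∈ res h, z = maxrg B g' h'}, w jf = true
    · rw [if_pos (e1.mpr c1), if_pos c1]
    · rw [if_neg (fun hx => c1 (e1.mp hx)), if_neg c1]
      by_cases c2 : ∀ w ∈ {z | ∃ g' ∈ res g, ∃ h' ∈ res h, z = maxrg B g' h'}, w jf = false
      · rw [if_pos (e2.mpr c2), if_pos c2]
      · rw [if_neg (fun hx => c2 (e2.mp hx)), if_neg c2]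
  · rw [supP_snd]
    rw [show minrgM B g h jf =
      supStr {z | ∃ g' ∈ res g, ∃ h' ∈ res h, z = minrg B g' h'} jf from rfl]
    unfold supStr
    by_cases c3 : ∀ w ∈ {z | ∃ g' ∈ res g, ∃ h' ∈ res h, z = minrg B g' h'}, w jf = true
    · rw [if_pos (e3.mpr c3), if_pos c3]
    · rw [if_neg (fun hx => c3 (e3.mp hx)), if_neg c3]
      by_cases c4 : ∀ w ∈ {z | ∃ g' ∈ res g, ∃ h' ∈ res h, z = minrg B g' h'}, w jf = false
      · rw [if_pos (e4.mpr c4), if_pos c4]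
      · rw [if_neg (fun hx => c4 (e4.mp hx)), if_neg c4]

/-- For valid strings `g, h` and each `i ∈ [1,B]`, applying `out_M` to the metastable
prefix state `s^{(i-1)}_M` and the `i`-th input bit pair yields the `i`-th bits of
`max^rg_M{g,h}` and `min^rg_M{g,h}`. -/
theorem outM_correct (B : ℕ) (g h : Fin B → KBit) (hg : g ∈ Valid B) (hh : h ∈ Valid B)
    (i : ℕ) (hi1 : 1 ≤ i) (hiB : i ≤ B) :
    outM (sM B g h (i - 1)) (g ⟨i - 1, by omega⟩, h ⟨i - 1, by omega⟩) =
      (maxrgM B g h ⟨i - 1, by omega⟩, minrgM B g h ⟨i - 1, by omega⟩) := by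
  exact main_correct B g h hg hh (i - 1) (by omega)
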